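/- Let n ≤ p and let Σ ∈ ℝ^{n×p} have full row rank n, so that Σ·Σᵀ is invertible, and set Σ^♯ = Σᵀ·(Σ·Σᵀ)⁻¹. Then for every δΣ ∈ ℝ^{n×p}, the derivative at t = 0 of t ↦ log det(((Σ + t·δΣ)·(Σ + t·δΣ)ᵀ)^{1/2}) equals tr(Σ^♯·δΣ). -/

import Mathlib

open Matrix

/-- The positive semidefinite square root of a positive semidefinite real matrix
(and junk value `0` otherwise); for a positive definite `A` this is the unique
symmetric positive definite square root `A^{1/2}`. -/
noncomputable def matSqrt {n : ℕ} (A : Matrix (Fin n) (Fin n) ℝ) :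
    Matrix (Fin n) (Fin n) ℝ :=
  open Classical in
  if h : A.PosSemidef then
    (h.1.eigenvectorUnitary : Matrix (Fin n) (Fin n) ℝ) *
      diagonal ((↑) ∘ Real.sqrt ∘ h.1.eigenvalues) *
      (star h.1.eigenvectorUnitary : Matrix (Fin n) (Fin n) ℝ)
  else 0

private lemma psd_det_nonneg {n : ℕ} {A : Matrix (Fin n) (Fin n) ℝ}
    (h : A.PosSemidef) : 0 ≤ A.det := by
  rw [h.isHermitian.det_eq_prod_eigenvalues]
  exact Finset.prod_nonneg fun i _ => h.eigenvalues_nonneg i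

private lemma det_matSqrt {n : ℕ} {A : Matrix (Fin n) (Fin n) ℝ}
    (h : A.PosSemidef) : (matSqrt A).det = Real.sqrt A.det := by
  rw [matSqrt, dif_pos h]
  have hu : (star h.1.eigenvectorUnitary : Matrix (Fin n) (Fin n) ℝ) *
      (h.1.eigenvectorUnitary : Matrix (Fin n) (Fin n) ℝ) = 1 := Unitary.coe_star_mul_self _
  have hd := congrArg Matrix.det hu
  rw [det_mul, det_one] at hd
  rw [det_mul, det_mul, det_diagonal, h.1.det_eq_prod_eigenvalues]
  calc _ = (star h.1.eigenvectorUnitary : Matrix (Fin n) (Fin n) ℝ).det *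
        (h.1.eigenvectorUnitary : Matrix (Fin n) (Fin n) ℝ).det *
        ∏ i, Real.sqrt (h.1.eigenvalues i) := by simp only [Function.comp_apply]; ring
    _ = ∏ i, Real.sqrt (h.1.eigenvalues i) := by rw [hd, one_mul]
    _ = _ := by rw [← Real.sqrt_prod _ (fun i _ => h.eigenvalues_nonneg i)]; rfl

private lemma psd_self_mul_transpose {n p : ℕ} (A : Matrix (Fin n) (Fin p) ℝ) :
    (A * Aᵀ).PosSemidef := by
  have := Matrix.posSemidef_self_mul_conjTranspose A
  rwa [conjTranspose_eq_transpose_of_trivial] at this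

/-- **Lemma 5 (rectangular chain rule).** For full-row-rank `Sig ∈ ℝ^{n×p}`
(`n ≤ p`), `Sig Sigᵀ` is invertible and the directional derivative of
`J(Σ) = log det ((Σ Σᵀ)^{1/2})` in any direction `dS` equals `tr (Sig♯ dS)`,
with `Sig♯ = Sigᵀ (Sig Sigᵀ)⁻¹` the Moore–Penrose pseudo-inverse. -/
theorem deriv_logdet_sqrt_rectangular (n p : ℕ) (hnp : n ≤ p)
    (Sig : Matrix (Fin n) (Fin p) ℝ) (hrank : Sig.rank = n) :
    IsUnit (Sig * Sigᵀ).det ∧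
      ∀ dS : Matrix (Fin n) (Fin p) ℝ,
        deriv (fun t : ℝ =>
          Real.log (matSqrt ((Sig + t • dS) * (Sig + t • dS)ᵀ)).det) 0 =
        (Sigᵀ * (Sig * Sigᵀ)⁻¹ * dS).trace := by
  classical
  set A := Sig * Sigᵀ with hAdef
  -- Step 1: `A` is invertible.
  have hrankA : A.rank = n := by
    rw [hAdef, Matrix.rank_self_mul_transpose, hrank]
  have hUnit : IsUnit A := by
    rw [← Matrix.mulVec_injective_iff_isUnit]
    have hsurj : Function.Surjective A.mulVecLin := by
      rw [← LinearMap.range_eq_top]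
      apply Submodule.eq_top_of_finrank_eq
      rw [← Matrix.rank, hrankA]
      simp [Module.finrank_pi]
    have hinj : Function.Injective A.mulVecLin :=
      LinearMap.injective_iff_surjective.mpr hsurj
    intro x y hxy
    exact hinj (by simpa [Matrix.mulVecLin_apply] using hxy)
  have hdetUnit : IsUnit A.det := (Matrix.isUnit_iff_isUnit_det A).mp hUnit
  have hdet0 : A.det ≠ 0 := hdetUnit.ne_zero
  refine ⟨hdetUnit, fun dS => ?_⟩
  set B := dS * Sigᵀ + Sig * dSᵀ with hBdef
  set Cm := dS * dSᵀ with hCdef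
  -- matrix expansion
  have hexp : ∀ t : ℝ, (Sig + t • dS) * (Sig + t • dS)ᵀ
      = A + t • B + (t ^ 2) • Cm := by
    intro t
    ext i j
    simp [hAdef, hBdef, hCdef, Matrix.add_mul, Matrix.mul_add, Matrix.transpose_add,
      Matrix.transpose_smul, Matrix.smul_mul, Matrix.mul_smul, Matrix.add_apply,
      Matrix.smul_apply, smul_eq_mul]
    ring
  -- the determinant as a polynomial
  set Pol : Polynomial ℝ :=
    (A.map (Polynomial.C) + (Polynomial.X : Polynomial ℝ) • B.map Polynomial.C
      + ((Polynomial.X : Polynomial ℝ) ^ 2) • Cm.map Polynomial.C).det with hPol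
  have hEval : ∀ t : ℝ, Pol.eval t = (A + t • B + (t ^ 2) • Cm).det := by
    intro t
    have := (Polynomial.evalRingHom t).map_det
      (A.map (Polynomial.C) + (Polynomial.X : Polynomial ℝ) • B.map Polynomial.C
        + ((Polynomial.X : Polynomial ℝ) ^ 2) • Cm.map Polynomial.C)
    rw [hPol]
    rw [show Pol.eval t = (Polynomial.evalRingHom t) Pol from rfl] at *
    rw [this]
    congr 1
    ext i j
    simp [Matrix.add_apply, Matrix.smul_apply, Matrix.map_apply, smul_eq_mul]
    ring
  have hEval0 : Pol.eval 0 = A.det := by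
    rw [hEval 0]; simp
  -- coeff 1 of Pol equals coeff 1 of the linearization
  set Q : Polynomial ℝ :=
    (A.map (Polynomial.C) + (Polynomial.X : Polynomial ℝ) • B.map Polynomial.C).det with hQ
  have hdvd : (Polynomial.X : Polynomial ℝ) ^ 2 ∣ Pol - Q := by
    set I : Ideal (Polynomial ℝ) := Ideal.span {(Polynomial.X : Polynomial ℝ) ^ 2} with hI
    have hmem : Pol - Q ∈ I := by
      rw [← Ideal.Quotient.eq_zero_iff_mem, map_sub, sub_eq_zero]
      rw [hPol, hQ, (Ideal.Quotient.mk I).map_det, (Ideal.Quotient.mk I).map_det]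
      congr 1
      ext i j
      simp only [RingHom.mapMatrix_apply, Matrix.map_apply, Matrix.add_apply,
        Matrix.smul_apply, smul_eq_mul, map_add]
      have h2 : (Ideal.Quotient.mk I)
          ((Polynomial.X : Polynomial ℝ) ^ 2 * Polynomial.C (Cm i j)) = 0 := by
        rw [Ideal.Quotient.eq_zero_iff_mem]
        exact Ideal.mul_mem_right _ _ (Ideal.subset_span rfl)
      rw [h2, add_zero]
    rwa [← Ideal.mem_span_singleton, ← hI]
  have hcoeff1 : Pol.coeff 1 = Q.coeff 1 := by
    obtain ⟨S, hS⟩ := hdvd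
    have : (Pol - Q).coeff 1 = 0 := by
      rw [hS, mul_comm, Polynomial.coeff_mul_X_pow']
      simp
    have h := Polynomial.coeff_sub Pol Q 1
    rw [this] at h
    linarith [h]
  -- compute coeff 1 of Q
  have hQval : Q.coeff 1 = A.det * (A⁻¹ * B).trace := by
    have hmat : A.map (Polynomial.C) + (Polynomial.X : Polynomial ℝ) • B.map Polynomial.C
        = (A.map (Polynomial.C)) *
          (1 + (Polynomial.X : Polynomial ℝ) • (A⁻¹ * B).map Polynomial.C) := by
      rw [Matrix.mul_add, Matrix.mul_one, Matrix.mul_smul]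
      congr 2
      rw [← Matrix.map_mul, ← Matrix.mul_assoc, Matrix.mul_nonsing_inv _ hdetUnit,
        Matrix.one_mul]
    have hfact : Q = ((A.map (Polynomial.C)) *
        (1 + (Polynomial.X : Polynomial ℝ) • (A⁻¹ * B).map Polynomial.C)).det := by
      rw [hQ, hmat]
    rw [hfact, Matrix.det_mul]
    have hdetC : (A.map (Polynomial.C)).det = Polynomial.C A.det := by
      rw [(Polynomial.C : ℝ →+* Polynomial ℝ).map_det]; rfl
    rw [hdetC, Polynomial.coeff_C_mul, Matrix.coeff_det_one_add_X_smul_one]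
  -- assemble the derivative
  have hfun : (fun t : ℝ =>
      Real.log (matSqrt ((Sig + t • dS) * (Sig + t • dS)ᵀ)).det)
      = fun t : ℝ => Real.log (Pol.eval t) / 2 := by
    funext t
    have hpsd := psd_self_mul_transpose (Sig + t • dS)
    rw [det_matSqrt hpsd, Real.log_sqrt (psd_det_nonneg hpsd), hexp t, ← hEval t]
  have hne : Pol.eval 0 ≠ 0 := by rw [hEval0]; exact hdet0
  have hder : HasDerivAt (fun t : ℝ => Real.log (Pol.eval t) / 2)
      ((Pol.derivative.eval 0 / Pol.eval 0) / 2) 0 :=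
    ((Pol.hasDerivAt 0).log hne).div_const 2
  have hderval : Pol.derivative.eval 0 = Pol.coeff 1 := by
    rw [← Polynomial.coeff_zero_eq_eval_zero, Polynomial.coeff_derivative]
    simp
  rw [hfun, hder.deriv, hderval, hcoeff1, hQval, hEval0,
    mul_div_cancel_left₀ _ hdet0]
  -- trace computation
  have hAsymm : Aᵀ = A := by
    rw [hAdef, Matrix.transpose_mul, Matrix.transpose_transpose]
  have t1 : (A⁻¹ * (dS * Sigᵀ)).trace = (Sigᵀ * A⁻¹ * dS).trace := by
    rw [← Matrix.mul_assoc, Matrix.trace_mul_cycle]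
  have t2 : (A⁻¹ * (Sig * dSᵀ)).trace = (Sigᵀ * A⁻¹ * dS).trace := by
    rw [← Matrix.trace_transpose, ← Matrix.mul_assoc, Matrix.transpose_mul,
      Matrix.transpose_mul, Matrix.transpose_transpose, Matrix.transpose_nonsing_inv,
      hAsymm, Matrix.mul_assoc, Matrix.trace_mul_comm, ← Matrix.mul_assoc]
  rw [hBdef, Matrix.mul_add, Matrix.trace_add, t1, t2]
  ring
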